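/- There exists an absolute constant C > 0 such that the following holds for all positive integers m, n. For every matrix A ∈ ℝ^{m×n} with ‖A‖_{1→∞} ≤ 1 and every diagonal matrix Λ ∈ ℝ^{n×n} with ‖Λ‖_{1→∞} ≤ 1, there exists a vector v ∈ [−1,1]^n such that (i) the number of indices i ∈ [n] with |v_i| = 1 is at least n/C, and (ii) ‖AΛv‖_∞ ≤ C·√(n·log(m/n + 2)). -/

import Mathlib

open Finset Real

namespace SpencerAux

open scoped Classical

noncomputable def sgn (b : Bool) : ℝ := if b then 1 else -1

lemma abs_sgn (b : Bool) : |sgn b| = 1 := by cases b <;> simp [sgn]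

lemma sgn_sq (b : Bool) : sgn b ^ 2 = 1 := by cases b <;> norm_num [sgn]

/-- MGF bound for a ±1 weighted sum. -/
lemma mgf_bound {n : ℕ} (w : Fin n → ℝ) (hw : ∀ j, |w j| ≤ 1) (u : ℝ) :
    ∑ χ : Fin n → Bool, Real.exp (u * ∑ j, w j * sgn (χ j)) ≤
      2 ^ n * Real.exp (u ^ 2 * n / 2) := by
  have h1 : ∀ χ : Fin n → Bool, Real.exp (u * ∑ j, w j * sgn (χ j))
      = ∏ j, Real.exp (u * (w j * sgn (χ j))) := by
    intro χ
    rw [← Real.exp_sum, Finset.mul_sum]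
  simp only [h1]
  have h2 : ∑ χ : Fin n → Bool, ∏ j, Real.exp (u * (w j * sgn (χ j)))
      = ∏ j, ∑ b : Bool, Real.exp (u * (w j * sgn b)) := by
    rw [Finset.prod_univ_sum]
    rw [Fintype.piFinset_univ]
  rw [h2]
  have h3 : ∀ j : Fin n, ∑ b : Bool, Real.exp (u * (w j * sgn b))
      ≤ 2 * Real.exp (u ^ 2 / 2) := by
    intro j
    have : ∑ b : Bool, Real.exp (u * (w j * sgn b))
        = Real.exp (u * w j) + Real.exp (-(u * w j)) := by
      simp only [Fintype.sum_bool, sgn]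
      norm_num
    rw [this]
    have hcosh := Real.cosh_le_exp_half_sq (u * w j)
    rw [Real.cosh_eq] at hcosh
    have h4 : (u * w j) ^ 2 ≤ u ^ 2 := by
      have : (u * w j)^2 = u^2 * (w j)^2 := by ring
      rw [this]
      have hw2 : (w j)^2 ≤ 1 := by
        have := abs_le.1 (hw j); nlinarith
      nlinarith [sq_nonneg u]
    nlinarith [Real.exp_le_exp.2 (by linarith : (u * w j)^2/2 ≤ u^2/2), hcosh,
      Real.exp_pos (u^2/2)]
  calc ∏ j, ∑ b : Bool, Real.exp (u * (w j * sgn b))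
      ≤ ∏ _j : Fin n, (2 * Real.exp (u ^ 2 / 2)) := by
        apply Finset.prod_le_prod
        · intro j _
          positivity
        · intro j _; exact h3 j
    _ = 2 ^ n * Real.exp (u ^ 2 * n / 2) := by
        rw [Finset.prod_const, Finset.card_univ, Fintype.card_fin, mul_pow,
          ← Real.exp_nat_mul]
        ring_nf

/-- Hoeffding upper-tail counting bound. -/
lemma tail_bound {n : ℕ} (hn : 0 < n) (w : Fin n → ℝ) (hw : ∀ j, |w j| ≤ 1) {t : ℝ} (ht : 0 ≤ t) :
    ((univ.filter fun χ : Fin n → Bool => t ≤ ∑ j, w j * sgn (χ j)).card : ℝ) ≤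
      2 ^ n * Real.exp (-t ^ 2 / (2 * n)) := by
  set u : ℝ := t / n with hu
  have hn' : (0:ℝ) < n := by exact_mod_cast hn
  have hu0 : 0 ≤ u := by positivity
  have key : ((univ.filter fun χ : Fin n → Bool => t ≤ ∑ j, w j * sgn (χ j)).card : ℝ)
      * Real.exp (u * t) ≤ 2 ^ n * Real.exp (u ^ 2 * n / 2) := by
    calc ((univ.filter fun χ : Fin n → Bool => t ≤ ∑ j, w j * sgn (χ j)).card : ℝ)
          * Real.exp (u * t)
        = ∑ _χ ∈ (univ.filter fun χ : Fin n → Bool => t ≤ ∑ j, w j * sgn (χ j)),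
            Real.exp (u * t) := by rw [Finset.sum_const, nsmul_eq_mul]
      _ ≤ ∑ χ ∈ (univ.filter fun χ : Fin n → Bool => t ≤ ∑ j, w j * sgn (χ j)),
            Real.exp (u * ∑ j, w j * sgn (χ j)) := by
          apply Finset.sum_le_sum
          intro χ hχ
          have := (Finset.mem_filter.1 hχ).2
          exact Real.exp_le_exp.2 (by nlinarith)
      _ ≤ ∑ χ : Fin n → Bool, Real.exp (u * ∑ j, w j * sgn (χ j)) := by
          apply Finset.sum_le_sum_of_subset_of_nonneg (Finset.filter_subset _ _)
          intro χ _ _; positivity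
      _ ≤ 2 ^ n * Real.exp (u ^ 2 * n / 2) := mgf_bound w hw u
  have hexp : Real.exp (u ^ 2 * n / 2) / Real.exp (u * t) = Real.exp (-t ^ 2 / (2 * n)) := by
    rw [← Real.exp_sub]
    congr 1
    rw [hu]
    field_simp [hu]
    ring
  have h2 : ((univ.filter fun χ : Fin n → Bool => t ≤ ∑ j, w j * sgn (χ j)).card : ℝ)
      ≤ 2 ^ n * Real.exp (u ^ 2 * n / 2) / Real.exp (u * t) := by
    rw [le_div_iff₀ (Real.exp_pos _)]
    exact key
  calc ((univ.filter fun χ : Fin n → Bool => t ≤ ∑ j, w j * sgn (χ j)).card : ℝ)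
      ≤ 2 ^ n * Real.exp (u ^ 2 * n / 2) / Real.exp (u * t) := h2
    _ = 2 ^ n * Real.exp (-t ^ 2 / (2 * n)) := by rw [mul_div_assoc, hexp]

/-- Hoeffding lower-tail counting bound. -/
lemma tail_bound_neg {n : ℕ} (hn : 0 < n) (w : Fin n → ℝ) (hw : ∀ j, |w j| ≤ 1) {t : ℝ} (ht : 0 ≤ t) :
    ((univ.filter fun χ : Fin n → Bool => (∑ j, w j * sgn (χ j)) ≤ -t).card : ℝ) ≤
      2 ^ n * Real.exp (-t ^ 2 / (2 * n)) := by
  have hw' : ∀ j, |(-w) j| ≤ 1 := by intro j; simpa using hw j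
  have := tail_bound hn (-w) hw' ht
  have hset : (univ.filter fun χ : Fin n → Bool => (∑ j, w j * sgn (χ j)) ≤ -t)
      = (univ.filter fun χ : Fin n → Bool => t ≤ ∑ j, (-w) j * sgn (χ j)) := by
    apply Finset.filter_congr
    intro χ _
    simp only [Pi.neg_apply, neg_mul, Finset.sum_neg_distrib]
    constructor
    · intro h; linarith
    · intro h; linarith
  rw [hset]
  exact this


/-- entropy term bound: `-q log q ≤ 2√q` on `[0,1]` (in fact for all `q ≥ 0`). -/
lemma neg_mul_log_le_two_sqrt {q : ℝ} (h0 : 0 ≤ q) : -(q * Real.log q) ≤ 2 * Real.sqrt q := by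
  rcases eq_or_lt_of_le h0 with h | h
  · simp [← h]
  · have hsq : 0 < Real.sqrt q := Real.sqrt_pos.2 h
    have hlog : Real.log (1 / Real.sqrt q) ≤ 1 / Real.sqrt q - 1 :=
      Real.log_le_sub_one_of_pos (by positivity)
    have hl : -Real.log q = 2 * Real.log (1 / Real.sqrt q) := by
      rw [Real.log_div (by norm_num) (ne_of_gt hsq), Real.log_one, Real.log_sqrt h0]
      ring
    have : -(q * Real.log q) = q * (2 * Real.log (1 / Real.sqrt q)) := by
      rw [← hl]; ring
    rw [this]
    have h2 : q * (2 * Real.log (1 / Real.sqrt q)) ≤ q * (2 * (1 / Real.sqrt q - 1)) := by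
      apply mul_le_mul_of_nonneg_left _ h.le
      linarith
    refine h2.trans ?_
    have hq : q / Real.sqrt q = Real.sqrt q := Real.div_sqrt
    have : q * (2 * (1 / Real.sqrt q - 1)) = 2 * (q / Real.sqrt q) - 2 * q := by ring
    rw [this, hq]
    nlinarith

/-- entropy term bound near 1: `-q log q ≤ 2(1-q)` for `q ≥ 1/2`. -/
lemma neg_mul_log_le_center {q : ℝ} (h0 : 1/2 ≤ q) (h1 : q ≤ 1) :
    -(q * Real.log q) ≤ 2 * (1 - q) := by
  have hq : 0 < q := by linarith
  have hlog : Real.log (1 / q) ≤ 1 / q - 1 := Real.log_le_sub_one_of_pos (by positivity)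
  have hl : -Real.log q = Real.log (1 / q) := by
    rw [Real.log_div (by norm_num) (ne_of_gt hq), Real.log_one]; ring
  have h2 : -(q * Real.log q) = q * Real.log (1/q) := by rw [← hl]; ring
  rw [h2]
  have h3 : q * Real.log (1/q) ≤ q * (1/q - 1) := by
    apply mul_le_mul_of_nonneg_left hlog hq.le
  have h4 : q * (1/q - 1) = 1 - q := by field_simp
  nlinarith

lemma geom_nat {ρ : ℝ} (h0 : 0 ≤ ρ) (h2 : ρ ≤ 1/2) (Q : Finset ℕ) (hQ : 0 ∉ Q) :
    ∑ j ∈ Q, ρ ^ j ≤ 2 * ρ := by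
  set M := Q.sup id with hM
  have hsub : Q ⊆ (Finset.range M).image (· + 1) := by
    intro j hj
    have hj0 : j ≠ 0 := fun h => hQ (h ▸ hj)
    have hjM : j ≤ M := Finset.le_sup (f := id) hj
    simp only [Finset.mem_image, Finset.mem_range]
    exact ⟨j - 1, by omega, by omega⟩
  have h1 : ∑ j ∈ Q, ρ ^ j ≤ ∑ j ∈ (Finset.range M).image (· + 1), ρ ^ j := by
    apply Finset.sum_le_sum_of_subset_of_nonneg hsub
    intro i _ _; positivity
  have h2' : ∑ j ∈ (Finset.range M).image (· + 1), ρ ^ j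
      = ρ * ∑ i ∈ Finset.range M, ρ ^ i := by
    rw [Finset.sum_image (by intro a _ b _ h; beta_reduce at h; omega), Finset.mul_sum]
    apply Finset.sum_congr rfl
    intro i _
    rw [pow_succ]; ring
  have h3 : ∑ i ∈ Finset.range M, ρ ^ i ≤ 2 := by
    have hρ1 : ρ ≠ 1 := by intro h; rw [h] at h2; norm_num at h2
    rw [geom_sum_eq hρ1]
    rw [div_le_iff_of_neg (by nlinarith : ρ - 1 < 0)]
    have : (0:ℝ) ≤ ρ ^ M := by positivity
    nlinarith
  calc ∑ j ∈ Q, ρ ^ j ≤ ρ * ∑ i ∈ Finset.range M, ρ ^ i := by rw [← h2']; exact h1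
    _ ≤ ρ * 2 := by apply mul_le_mul_of_nonneg_left h3 h0
    _ = 2 * ρ := by ring

lemma geom_int {ρ : ℝ} (h0 : 0 ≤ ρ) (h2 : ρ ≤ 1/2) (F : Finset ℤ) :
    ∑ k ∈ F.erase 0, ρ ^ k.natAbs ≤ 4 * ρ := by
  classical
  have hsplit := Finset.sum_filter_add_sum_filter_not (F.erase 0) (fun k => 0 < k)
    (fun k => ρ ^ k.natAbs)
  rw [← hsplit]
  have hpos : ∑ k ∈ (F.erase 0).filter (fun k => 0 < k), ρ ^ k.natAbs ≤ 2 * ρ := by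
    have heq : ∑ k ∈ (F.erase 0).filter (fun k => 0 < k), ρ ^ k.natAbs
        = ∑ j ∈ ((F.erase 0).filter (fun k => 0 < k)).image Int.natAbs, ρ ^ j := by
      rw [Finset.sum_image]
      intro a ha b hb h
      simp only [Finset.mem_coe, Finset.mem_filter] at ha hb
      omega
    rw [heq]
    apply geom_nat h0 h2
    simp only [Finset.mem_image, Finset.mem_filter]
    rintro ⟨k, ⟨_, hk⟩, hk0⟩
    omega
  have hneg : ∑ k ∈ (F.erase 0).filter (fun k => ¬ 0 < k), ρ ^ k.natAbs ≤ 2 * ρ := by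
    have heq : ∑ k ∈ (F.erase 0).filter (fun k => ¬ 0 < k), ρ ^ k.natAbs
        = ∑ j ∈ ((F.erase 0).filter (fun k => ¬ 0 < k)).image Int.natAbs, ρ ^ j := by
      rw [Finset.sum_image]
      intro a ha b hb h
      simp only [Finset.mem_coe, Finset.mem_filter, Finset.mem_erase] at ha hb
      omega
    rw [heq]
    apply geom_nat h0 h2
    simp only [Finset.mem_image, Finset.mem_filter, Finset.mem_erase]
    rintro ⟨k, ⟨⟨hk0, _⟩, hk⟩, hkabs⟩
    omega
  linarith

/-- abstract entropy-sum bound for a bucketed distribution. -/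
lemma entropy_sum_bound {q : ℤ → ℝ} {ρ : ℝ} (hρ0 : 0 < ρ) (hρ2 : ρ ≤ 1/2) (B : Finset ℤ)
    (hq0 : ∀ k ∈ B, 0 ≤ q k)
    (hq1 : ∀ k ∈ B, q k ≤ 1)
    (htail : ∀ k ∈ B, k ≠ 0 → q k ≤ ρ ^ (2 * k.natAbs))
    (hcen : 1 - 2 * ρ ^ 2 ≤ q 0) :
    ∑ k ∈ B, -(q k * Real.log (q k)) ≤ 16 * ρ := by
  have hrest : ∑ k ∈ B.erase 0, -(q k * Real.log (q k)) ≤ 8 * ρ := by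
    have h1 : ∀ k ∈ B.erase 0, -(q k * Real.log (q k)) ≤ 2 * ρ ^ k.natAbs := by
      intro k hk
      obtain ⟨hk0, hkB⟩ := Finset.mem_erase.1 hk
      have hq := hq0 k hkB
      refine (neg_mul_log_le_two_sqrt hq).trans ?_
      have h2 : q k ≤ (ρ ^ k.natAbs) ^ 2 := by
        rw [← pow_mul, mul_comm]
        exact htail k hkB hk0
      have h3 : Real.sqrt (q k) ≤ ρ ^ k.natAbs := by
        rw [show (ρ ^ k.natAbs) ^ 2 = (ρ ^ k.natAbs) * (ρ ^ k.natAbs) by ring] at h2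
        have := Real.sqrt_le_sqrt h2
        rwa [Real.sqrt_mul_self (by positivity)] at this
      linarith
    calc ∑ k ∈ B.erase 0, -(q k * Real.log (q k)) ≤ ∑ k ∈ B.erase 0, 2 * ρ ^ k.natAbs :=
          Finset.sum_le_sum h1
      _ = 2 * ∑ k ∈ B.erase 0, ρ ^ k.natAbs := by rw [Finset.mul_sum]
      _ ≤ 2 * (4 * ρ) := by
          have := geom_int hρ0.le hρ2 B
          linarith
      _ = 8 * ρ := by ring
  by_cases h0 : (0:ℤ) ∈ B
  · rw [← Finset.add_sum_erase _ _ h0]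
    have hρsq : ρ ^ 2 ≤ ρ * (1/2) := by nlinarith
    have hcen2 : 1/2 ≤ q 0 := by nlinarith
    have hc := neg_mul_log_le_center hcen2 (hq1 0 h0)
    have : -(q 0 * Real.log (q 0)) ≤ 4 * ρ ^ 2 := by nlinarith
    nlinarith
  · rw [← Finset.erase_eq_of_notMem h0]
    linarith

lemma row_entropy {n : ℕ} (hn : 0 < n) (w : Fin n → ℝ) (hw : ∀ j, |w j| ≤ 1)
    {Δ : ℝ} (hΔ : Real.sqrt (256 * Real.log 2 * n) ≤ Δ)
    (b : (Fin n → Bool) → ℤ)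
    (hb : ∀ χ, b χ = ⌊(∑ j, w j * sgn (χ j)) / Δ + 1/2⌋) :
    ∑ k ∈ univ.image b,
      -((((univ.filter fun χ : Fin n → Bool => b χ = k).card : ℝ) / 2 ^ n) *
        Real.log (((univ.filter fun χ : Fin n → Bool => b χ = k).card : ℝ) / 2 ^ n))
      ≤ 16 * Real.exp (-Δ ^ 2 / (16 * n)) := by
  have hn' : (0:ℝ) < n := by exact_mod_cast hn
  have hlog2 : (0:ℝ) < Real.log 2 := Real.log_pos one_lt_two
  have hxpos : (0:ℝ) < 256 * Real.log 2 * n := by positivity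
  have hΔpos : 0 < Δ := lt_of_lt_of_le (Real.sqrt_pos.2 hxpos) hΔ
  have hΔ2 : 256 * Real.log 2 * n ≤ Δ ^ 2 := by
    have := pow_le_pow_left₀ (Real.sqrt_nonneg _) hΔ 2
    rwa [Real.sq_sqrt hxpos.le] at this
  set ρ := Real.exp (-Δ ^ 2 / (16 * n)) with hρdef
  have hρ0 : 0 < ρ := Real.exp_pos _
  have hρ2 : ρ ≤ 1/2 := by
    have h1 : -Δ ^ 2 / (16 * n) ≤ -Real.log 2 := by
      rw [div_le_iff₀ (by positivity)]
      nlinarith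
    calc ρ ≤ Real.exp (-Real.log 2) := Real.exp_le_exp.2 h1
      _ = 1/2 := by rw [Real.exp_neg, Real.exp_log (by norm_num)]; norm_num
  have hpow : (0:ℝ) < 2 ^ n := by positivity
  -- cardinality facts
  have hcard_le : ∀ k : ℤ, ((univ.filter fun χ : Fin n → Bool => b χ = k).card : ℝ) ≤ 2 ^ n := by
    intro k
    have h1 : (univ.filter fun χ : Fin n → Bool => b χ = k).card ≤ Fintype.card (Fin n → Bool) :=
      (Finset.card_filter_le _ _).trans (le_of_eq Finset.card_univ)
    have h2 : Fintype.card (Fin n → Bool) = 2 ^ n := by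
      simp [Fintype.card_fun]
    rw [h2] at h1
    exact_mod_cast h1
  apply entropy_sum_bound hρ0 hρ2
  · intro k _; positivity
  · intro k _
    rw [div_le_one hpow]
    exact hcard_le k
  · -- tail bound
    intro k _ hk0
    have hna : 1 ≤ (k.natAbs : ℝ) := by
      have : 1 ≤ k.natAbs := by omega
      exact_mod_cast this
    set t : ℝ := ((k.natAbs : ℝ) - 1/2) * Δ with ht_def
    have ht0 : 0 ≤ t := by nlinarith
    have hc : ((univ.filter fun χ : Fin n → Bool => b χ = k).card : ℝ) ≤
        2 ^ n * Real.exp (-t ^ 2 / (2 * n)) := by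
      rcases lt_or_ge k 0 with hkneg | hkpos
      · -- k ≤ -1 : lower tail
        have hkabs : (k.natAbs : ℝ) = -(k:ℝ) := by
          have h : (k.natAbs : ℤ) = -k := by omega
          rw [← Int.cast_natCast (R := ℝ), h, Int.cast_neg]
        have hsub : (univ.filter fun χ : Fin n → Bool => b χ = k) ⊆
            (univ.filter fun χ : Fin n → Bool => (∑ j, w j * sgn (χ j)) ≤ -t) := by
          intro χ hχ
          have hbk : b χ = k := (Finset.mem_filter.1 hχ).2
          rw [hb] at hbk
          rw [Finset.mem_filter]
          refine ⟨Finset.mem_univ _, ?_⟩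
          have hlt := Int.lt_floor_add_one ((∑ j, w j * sgn (χ j)) / Δ + 1/2)
          rw [hbk] at hlt
          have h3 : (∑ j, w j * sgn (χ j)) / Δ < (k : ℝ) + 1/2 := by
            push_cast at hlt
            linarith
          have h4 : (∑ j, w j * sgn (χ j)) < ((k : ℝ) + 1/2) * Δ := by
            rw [div_lt_iff₀ hΔpos] at h3
            exact h3
          rw [ht_def, hkabs]
          nlinarith
        calc ((univ.filter fun χ : Fin n → Bool => b χ = k).card : ℝ)
            ≤ ((univ.filter fun χ : Fin n → Bool => (∑ j, w j * sgn (χ j)) ≤ -t).card : ℝ) := by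
              exact_mod_cast Finset.card_le_card hsub
          _ ≤ 2 ^ n * Real.exp (-t ^ 2 / (2 * n)) := tail_bound_neg hn w hw ht0
      · -- k ≥ 1 : upper tail
        have hkabs : (k.natAbs : ℝ) = (k:ℝ) := by
          have h : (k.natAbs : ℤ) = k := by omega
          rw [← Int.cast_natCast (R := ℝ), h]
        have hsub : (univ.filter fun χ : Fin n → Bool => b χ = k) ⊆
            (univ.filter fun χ : Fin n → Bool => t ≤ ∑ j, w j * sgn (χ j)) := by
          intro χ hχ
          have hbk : b χ = k := (Finset.mem_filter.1 hχ).2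
          rw [hb] at hbk
          rw [Finset.mem_filter]
          refine ⟨Finset.mem_univ _, ?_⟩
          have hge := Int.floor_le ((∑ j, w j * sgn (χ j)) / Δ + 1/2)
          rw [hbk] at hge
          have h3 : (k : ℝ) - 1/2 ≤ (∑ j, w j * sgn (χ j)) / Δ := by
            push_cast at hge
            linarith
          have h4 : ((k : ℝ) - 1/2) * Δ ≤ ∑ j, w j * sgn (χ j) := by
            rw [← le_div_iff₀ hΔpos]
            linarith
          rw [ht_def, hkabs]
          exact h4
        calc ((univ.filter fun χ : Fin n → Bool => b χ = k).card : ℝ)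
            ≤ ((univ.filter fun χ : Fin n → Bool => t ≤ ∑ j, w j * sgn (χ j)).card : ℝ) := by
              exact_mod_cast Finset.card_le_card hsub
          _ ≤ 2 ^ n * Real.exp (-t ^ 2 / (2 * n)) := tail_bound hn w hw ht0
    -- now convert: exp(-t²/(2n)) ≤ ρ^(2 natAbs k)
    have hexp : Real.exp (-t ^ 2 / (2 * n)) ≤ ρ ^ (2 * k.natAbs) := by
      have hj : (0:ℝ) ≤ (4 * (k.natAbs:ℝ) - 1) * ((k.natAbs:ℝ) - 1) := by nlinarith
      have harg : -t ^ 2 / (2 * n) ≤ (2 * k.natAbs : ℝ) * (-Δ ^ 2 / (16 * n)) := by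
        have hr : (2 * k.natAbs : ℝ) * (-Δ ^ 2 / (16 * n)) = -((k.natAbs:ℝ) * Δ^2 / (8*n)) := by
          field_simp
          ring
        rw [hr, ht_def, neg_div, neg_le_neg_iff]
        rw [div_le_div_iff₀ (by positivity) (by positivity)]
        have expand : (((k.natAbs:ℝ) - 1/2) * Δ)^2 * (8*n) - (k.natAbs:ℝ) * Δ^2 * (2*n)
            = 2*((4*(k.natAbs:ℝ) - 1) * ((k.natAbs:ℝ) - 1)) * (Δ^2 * n) := by ring
        have hrt : 0 ≤ 2*((4*(k.natAbs:ℝ) - 1) * ((k.natAbs:ℝ) - 1)) * (Δ^2 * n) := by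
          apply mul_nonneg (by linarith) (by positivity)
        linarith
      have h5 := Real.exp_le_exp.2 harg
      calc Real.exp (-t ^ 2 / (2 * n))
          ≤ Real.exp ((2 * k.natAbs : ℝ) * (-Δ ^ 2 / (16 * n))) := h5
        _ = ρ ^ (2 * k.natAbs) := by
            rw [hρdef, ← Real.exp_nat_mul]
            norm_num
    rw [div_le_iff₀ hpow]
    calc ((univ.filter fun χ : Fin n → Bool => b χ = k).card : ℝ)
        ≤ 2 ^ n * Real.exp (-t ^ 2 / (2 * n)) := hc
      _ = Real.exp (-t ^ 2 / (2 * n)) * 2 ^ n := by ring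
      _ ≤ ρ ^ (2 * k.natAbs) * 2 ^ n := by
          apply mul_le_mul_of_nonneg_right hexp (by positivity)
  · -- center bound
    have hcover : (univ : Finset (Fin n → Bool)) ⊆
        (univ.filter fun χ : Fin n → Bool => b χ = 0) ∪
        ((univ.filter fun χ : Fin n → Bool => Δ/2 ≤ ∑ j, w j * sgn (χ j)) ∪
         (univ.filter fun χ : Fin n → Bool => (∑ j, w j * sgn (χ j)) ≤ -(Δ/2))) := by
      intro χ _
      by_cases hb0 : b χ = 0
      · exact Finset.mem_union_left _ (Finset.mem_filter.2 ⟨Finset.mem_univ _, hb0⟩)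
      · apply Finset.mem_union_right
        rw [hb] at hb0
        rw [Int.floor_eq_zero_iff] at hb0
        simp only [Set.mem_Ico, not_and_or, not_le, not_lt] at hb0
        rcases hb0 with h | h
        · apply Finset.mem_union_right
          rw [Finset.mem_filter]
          refine ⟨Finset.mem_univ _, ?_⟩
          have h2 : (∑ j, w j * sgn (χ j)) / Δ < -(1/2) := by linarith
          rw [div_lt_iff₀ hΔpos] at h2
          nlinarith
        · apply Finset.mem_union_left
          rw [Finset.mem_filter]
          refine ⟨Finset.mem_univ _, ?_⟩
          have h2 : 1/2 ≤ (∑ j, w j * sgn (χ j)) / Δ := by linarith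
          rw [le_div_iff₀ hΔpos] at h2
          linarith
    have hcards : 2 ^ n ≤
        (univ.filter fun χ : Fin n → Bool => b χ = 0).card +
        ((univ.filter fun χ : Fin n → Bool => Δ/2 ≤ ∑ j, w j * sgn (χ j)).card +
         (univ.filter fun χ : Fin n → Bool => (∑ j, w j * sgn (χ j)) ≤ -(Δ/2)).card) := by
      have h1 := Finset.card_le_card hcover
      have h2 : (univ : Finset (Fin n → Bool)).card = 2 ^ n := by
        rw [Finset.card_univ]
        simp [Fintype.card_fun]
      rw [h2] at h1
      have h3 := Finset.card_union_le
        (univ.filter fun χ : Fin n → Bool => b χ = 0)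
        ((univ.filter fun χ : Fin n → Bool => Δ/2 ≤ ∑ j, w j * sgn (χ j)) ∪
         (univ.filter fun χ : Fin n → Bool => (∑ j, w j * sgn (χ j)) ≤ -(Δ/2)))
      have h4 := Finset.card_union_le
        (univ.filter fun χ : Fin n → Bool => Δ/2 ≤ ∑ j, w j * sgn (χ j))
        (univ.filter fun χ : Fin n → Bool => (∑ j, w j * sgn (χ j)) ≤ -(Δ/2))
      exact h1.trans (h3.trans (Nat.add_le_add_left h4 _))
    have hρsq : Real.exp (-(Δ/2) ^ 2 / (2 * n)) = ρ ^ 2 := by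
      rw [hρdef, ← Real.exp_nat_mul]
      congr 1
      field_simp
      ring
    have h1 := tail_bound hn w hw (t := Δ/2) (by positivity)
    have h2 := tail_bound_neg hn w hw (t := Δ/2) (by positivity)
    rw [hρsq] at h1 h2
    have hcard0 : (2:ℝ) ^ n - 2 ^ n * (2 * ρ ^ 2) ≤
        ((univ.filter fun χ : Fin n → Bool => b χ = 0).card : ℝ) := by
      have h3 : (2:ℝ) ^ n ≤
          ((univ.filter fun χ : Fin n → Bool => b χ = 0).card : ℝ) +
          (((univ.filter fun χ : Fin n → Bool => Δ/2 ≤ ∑ j, w j * sgn (χ j)).card : ℝ) +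
           ((univ.filter fun χ : Fin n → Bool => (∑ j, w j * sgn (χ j)) ≤ -(Δ/2)).card : ℝ)) := by
        exact_mod_cast hcards
      linarith
    rw [le_div_iff₀ hpow]
    have hring : (1 - 2*ρ^2) * 2^n = (2:ℝ)^n - 2^n*(2*ρ^2) := by ring
    linarith

/-- Entropy subadditivity (Gibbs inequality) for the bucket vector. -/
lemma gibbs {n m : ℕ} (b : (Fin n → Bool) → (Fin m → ℤ)) :
    ∑ β ∈ univ.image b,
      -((((univ.filter fun χ : Fin n → Bool => b χ = β).card : ℝ) / 2 ^ n) *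
        Real.log (((univ.filter fun χ : Fin n → Bool => b χ = β).card : ℝ) / 2 ^ n))
    ≤ ∑ i : Fin m, ∑ k ∈ univ.image (fun χ : Fin n → Bool => b χ i),
      -((((univ.filter fun χ : Fin n → Bool => b χ i = k).card : ℝ) / 2 ^ n) *
        Real.log (((univ.filter fun χ : Fin n → Bool => b χ i = k).card : ℝ) / 2 ^ n)) := by
  have hpow : (0:ℝ) < 2 ^ n := by positivity
  have hcards : (univ : Finset (Fin n → Bool)).card = 2 ^ n := by
    rw [Finset.card_univ]; simp [Fintype.card_fun]
  set p : (Fin m → ℤ) → ℝ :=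
    fun β => (((univ.filter fun χ : Fin n → Bool => b χ = β).card : ℝ) / 2 ^ n) with hp
  set q : Fin m → ℤ → ℝ :=
    fun i k => (((univ.filter fun χ : Fin n → Bool => b χ i = k).card : ℝ) / 2 ^ n) with hq
  set B : Finset (Fin m → ℤ) := univ.image b with hB
  set Bi : Fin m → Finset ℤ := fun i => univ.image (fun χ : Fin n → Bool => b χ i) with hBi
  show ∑ β ∈ B, -(p β * Real.log (p β)) ≤ ∑ i : Fin m, ∑ k ∈ Bi i, -(q i k * Real.log (q i k))
  -- basic facts
  have hppos : ∀ β ∈ B, 0 < p β := by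
    intro β hβ
    rw [hB, Finset.mem_image] at hβ
    obtain ⟨χ, _, hχ⟩ := hβ
    have : χ ∈ univ.filter fun χ' : Fin n → Bool => b χ' = β :=
      Finset.mem_filter.2 ⟨Finset.mem_univ _, hχ⟩
    have hc : 0 < (univ.filter fun χ' : Fin n → Bool => b χ' = β).card :=
      Finset.card_pos.2 ⟨χ, this⟩
    rw [hp]
    have : (0:ℝ) < ((univ.filter fun χ' : Fin n → Bool => b χ' = β).card : ℝ) := by
      exact_mod_cast hc
    positivity
  have hqpos : ∀ (i : Fin m) (k : ℤ), k ∈ Bi i → 0 < q i k := by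
    intro i k hk
    rw [hBi, Finset.mem_image] at hk
    obtain ⟨χ, _, hχ⟩ := hk
    have : χ ∈ univ.filter fun χ' : Fin n → Bool => b χ' i = k :=
      Finset.mem_filter.2 ⟨Finset.mem_univ _, hχ⟩
    have hc : 0 < (univ.filter fun χ' : Fin n → Bool => b χ' i = k).card :=
      Finset.card_pos.2 ⟨χ, this⟩
    rw [hq]
    have : (0:ℝ) < ((univ.filter fun χ' : Fin n → Bool => b χ' i = k).card : ℝ) := by
      exact_mod_cast hc
    positivity
  have hpsum : ∑ β ∈ B, p β = 1 := by
    rw [hp, ← Finset.sum_div]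
    rw [div_eq_one_iff_eq (ne_of_gt hpow)]
    have := Finset.card_eq_sum_card_image b (univ : Finset (Fin n → Bool))
    rw [hcards] at this
    rw [← hB] at this
    exact_mod_cast this.symm
  have hqsum : ∀ i : Fin m, ∑ k ∈ Bi i, q i k = 1 := by
    intro i
    rw [hq, ← Finset.sum_div]
    rw [div_eq_one_iff_eq (ne_of_gt hpow)]
    have := Finset.card_eq_sum_card_image (fun χ : Fin n → Bool => b χ i)
      (univ : Finset (Fin n → Bool))
    rw [hcards] at this
    exact_mod_cast this.symm
  set qprod : (Fin m → ℤ) → ℝ := fun β => ∏ i, q i (β i) with hqprod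
  have hqprodpos : ∀ β ∈ B, 0 < qprod β := by
    intro β hβ
    rw [hqprod]
    apply Finset.prod_pos
    intro i _
    apply hqpos
    rw [hB, Finset.mem_image] at hβ
    obtain ⟨χ, _, hχ⟩ := hβ
    rw [hBi, Finset.mem_image]
    exact ⟨χ, Finset.mem_univ _, by rw [hχ]⟩
  -- Gibbs step
  have hgibbs : ∑ β ∈ B, -(p β * Real.log (p β)) ≤ ∑ β ∈ B, -(p β * Real.log (qprod β)) := by
    have hterm : ∀ β ∈ B, p β * Real.log (qprod β) - p β * Real.log (p β) ≤ qprod β - p β := by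
      intro β hβ
      have h1 : Real.log (qprod β / p β) ≤ qprod β / p β - 1 :=
        Real.log_le_sub_one_of_pos (div_pos (hqprodpos β hβ) (hppos β hβ))
      rw [Real.log_div (ne_of_gt (hqprodpos β hβ)) (ne_of_gt (hppos β hβ))] at h1
      have h2 := mul_le_mul_of_nonneg_left h1 (hppos β hβ).le
      have hpne : p β ≠ 0 := ne_of_gt (hppos β hβ)
      have h3 : p β * (qprod β / p β - 1) = qprod β - p β := by
        field_simp
      rw [h3] at h2
      calc p β * Real.log (qprod β) - p β * Real.log (p β)
          = p β * (Real.log (qprod β) - Real.log (p β)) := by ring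
        _ ≤ qprod β - p β := h2
    have hsum := Finset.sum_le_sum hterm
    have hqprodsum : ∑ β ∈ B, qprod β ≤ 1 := by
      have hsub : B ⊆ Fintype.piFinset Bi := by
        intro β hβ
        rw [Fintype.mem_piFinset]
        intro i
        rw [hB, Finset.mem_image] at hβ
        obtain ⟨χ, _, hχ⟩ := hβ
        rw [hBi, Finset.mem_image]
        exact ⟨χ, Finset.mem_univ _, by rw [hχ]⟩
      have h1 : ∑ β ∈ B, qprod β ≤ ∑ β ∈ Fintype.piFinset Bi, qprod β := by
        apply Finset.sum_le_sum_of_subset_of_nonneg hsub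
        intro β _ _
        rw [hqprod]
        apply Finset.prod_nonneg
        intro i _
        rw [hq]; positivity
      have h2 : ∑ β ∈ Fintype.piFinset Bi, qprod β = ∏ i, ∑ k ∈ Bi i, q i k := by
        rw [hqprod, Finset.prod_univ_sum]
      rw [h2] at h1
      have h3 : ∏ i, ∑ k ∈ Bi i, q i k = 1 := by
        rw [Finset.prod_eq_one]
        intro i _
        exact hqsum i
      rw [h3] at h1
      exact h1
    have hsum2 : ∑ β ∈ B, p β * Real.log (qprod β) - ∑ β ∈ B, p β * Real.log (p β) ≤
        ∑ β ∈ B, qprod β - ∑ β ∈ B, p β := by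
      rw [← Finset.sum_sub_distrib, ← Finset.sum_sub_distrib]
      exact hsum
    have h4 : ∑ β ∈ B, -(p β * Real.log (p β)) = -∑ β ∈ B, p β * Real.log (p β) := by
      rw [Finset.sum_neg_distrib]
    have h5 : ∑ β ∈ B, -(p β * Real.log (qprod β)) = -∑ β ∈ B, p β * Real.log (qprod β) := by
      rw [Finset.sum_neg_distrib]
    rw [h4, h5]
    rw [hpsum] at hsum2
    linarith
  refine hgibbs.trans (le_of_eq ?_)
  -- rewrite the cross entropy as sum over coordinates
  have hlog : ∀ β ∈ B, Real.log (qprod β) = ∑ i, Real.log (q i (β i)) := by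
    intro β hβ
    rw [hqprod]
    apply Real.log_prod
    intro i _
    apply ne_of_gt
    apply hqpos
    rw [hB, Finset.mem_image] at hβ
    obtain ⟨χ, _, hχ⟩ := hβ
    rw [hBi, Finset.mem_image]
    exact ⟨χ, Finset.mem_univ _, by rw [hχ]⟩
  calc ∑ β ∈ B, -(p β * Real.log (qprod β))
      = ∑ β ∈ B, ∑ i, p β * (-Real.log (q i (β i))) := by
        apply Finset.sum_congr rfl
        intro β hβ
        rw [hlog β hβ, Finset.mul_sum, ← Finset.sum_neg_distrib]
        apply Finset.sum_congr rfl
        intro i _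
        ring
    _ = ∑ i, ∑ β ∈ B, p β * (-Real.log (q i (β i))) := Finset.sum_comm
    _ = ∑ i : Fin m, ∑ k ∈ Bi i, -(q i k * Real.log (q i k)) := by
        apply Finset.sum_congr rfl
        intro i _
        have hmap : ∀ β ∈ B, β i ∈ Bi i := by
          intro β hβ
          rw [hB, Finset.mem_image] at hβ
          obtain ⟨χ, _, hχ⟩ := hβ
          rw [hBi, Finset.mem_image]
          exact ⟨χ, Finset.mem_univ _, by rw [hχ]⟩
        rw [← Finset.sum_fiberwise_of_maps_to hmap (fun β => p β * (-Real.log (q i (β i))))]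
        apply Finset.sum_congr rfl
        intro k hk
        have hfiber : ∀ β ∈ B.filter (fun β => β i = k),
            p β * (-Real.log (q i (β i))) = p β * (-Real.log (q i k)) := by
          intro β hβ
          rw [(Finset.mem_filter.1 hβ).2]
        rw [Finset.sum_congr rfl hfiber, ← Finset.sum_mul]
        -- now need  (∑ β ∈ B.filter (· i = k), p β) = q i k
        have hkey : ∑ β ∈ B.filter (fun β => β i = k), p β = q i k := by
          rw [hp, hq, ← Finset.sum_div]
          congr 1
          have hcount := Finset.card_eq_sum_card_fiberwise
            (f := b) (s := univ.filter fun χ : Fin n → Bool => b χ i = k)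
            (t := B.filter (fun β => β i = k))
            (by intro χ hχ
                rw [Finset.mem_coe, Finset.mem_filter]
                exact ⟨Finset.mem_image_of_mem b (Finset.mem_univ χ),
                  (Finset.mem_filter.1 hχ).2⟩)
          have hfib : ∀ β ∈ B.filter (fun β => β i = k),
              (((univ.filter fun χ : Fin n → Bool => b χ i = k).filter
                  (fun χ => b χ = β)).card : ℕ)
                = ((univ.filter fun χ : Fin n → Bool => b χ = β).card : ℕ) := by
            intro β hβ
            have hβik : β i = k := (Finset.mem_filter.1 hβ).2
            congr 1
            ext χ
            simp only [Finset.mem_filter, Finset.mem_univ, true_and]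
            constructor
            · rintro ⟨_, h⟩; exact h
            · intro h; exact ⟨by rw [h, hβik], h⟩
          rw [Finset.sum_congr rfl hfib] at hcount
          exact_mod_cast hcount.symm
        rw [hkey]
        ring


lemma ball_count {n : ℕ} (hn : 0 < n) (χ₁ : Fin n → Bool) :
    ((univ.filter fun χ : Fin n → Bool =>
        ((univ.filter fun j => χ j ≠ χ₁ j).card : ℝ) < n / 64).card : ℝ) <
      Real.exp (4 / 5 * n * Real.log 2) := by
  have hn' : (0:ℝ) < n := by exact_mod_cast hn
  have hlog64 : Real.log 64 = 6 * Real.log 2 := by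
    rw [show (64:ℝ) = 2 ^ 6 by norm_num, Real.log_pow]
    push_cast; ring
  have hlog64pos : 0 < Real.log 64 := by
    rw [hlog64]; positivity
  -- total weighted sum
  have htotal : ∑ χ : Fin n → Bool, (1/64:ℝ) ^ (univ.filter fun j => χ j ≠ χ₁ j).card
      = (65/64:ℝ) ^ n := by
    have h1 : ∀ χ : Fin n → Bool, (1/64:ℝ) ^ (univ.filter fun j => χ j ≠ χ₁ j).card
        = ∏ j, (if χ j ≠ χ₁ j then (1/64:ℝ) else 1) := by
      intro χ
      rw [Finset.prod_ite, Finset.prod_const, Finset.prod_const, one_pow, mul_one]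
    simp only [h1]
    have h3 := Finset.prod_univ_sum (fun _ : Fin n => (univ : Finset Bool))
      (fun j b => (if b ≠ χ₁ j then (1/64:ℝ) else 1))
    rw [Fintype.piFinset_univ] at h3
    rw [← h3]
    have h2 : ∀ j : Fin n, ∑ b : Bool, (if b ≠ χ₁ j then (1/64:ℝ) else 1) = 65/64 := by
      intro j
      cases hc : χ₁ j <;> simp [Fintype.sum_bool, hc] <;> norm_num
    rw [Finset.prod_congr rfl (fun j _ => h2 j), Finset.prod_const, Finset.card_univ,
      Fintype.card_fin]
  -- lower bound each ball term
  have hterm : ∀ χ : Fin n → Bool, ((univ.filter fun j => χ j ≠ χ₁ j).card : ℝ) < n / 64 →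
      Real.exp (-(n/64) * Real.log 64) ≤
        (1/64:ℝ) ^ (univ.filter fun j => χ j ≠ χ₁ j).card := by
    intro χ hχ
    set d := (univ.filter fun j => χ j ≠ χ₁ j).card with hd
    have h1 : (1/64:ℝ) ^ d = Real.exp (-(d:ℝ) * Real.log 64) := by
      rw [← Real.log_exp (-(d:ℝ) * Real.log 64)]
      congr 1
      rw [← Real.rpow_natCast (1/64:ℝ) d, ← Real.exp_log (x := (1/64:ℝ)) (by norm_num),
        ← Real.exp_mul]
      congr 1
      rw [Real.log_exp]
      rw [show (1/64:ℝ) = 64⁻¹ by norm_num, Real.log_inv]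
      ring
    rw [h1]
    apply Real.exp_le_exp.2
    have : (d:ℝ) ≤ n/64 := le_of_lt hχ
    nlinarith
  -- combine
  set ball := univ.filter fun χ : Fin n → Bool =>
    ((univ.filter fun j => χ j ≠ χ₁ j).card : ℝ) < n / 64 with hball
  have hcard : (ball.card : ℝ) * Real.exp (-(n/64) * Real.log 64) ≤ (65/64:ℝ) ^ n := by
    calc (ball.card : ℝ) * Real.exp (-(n/64) * Real.log 64)
        = ∑ _χ ∈ ball, Real.exp (-(n/64) * Real.log 64) := by
          rw [Finset.sum_const, nsmul_eq_mul]
      _ ≤ ∑ χ ∈ ball, (1/64:ℝ) ^ (univ.filter fun j => χ j ≠ χ₁ j).card := by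
          apply Finset.sum_le_sum
          intro χ hχ
          exact hterm χ (Finset.mem_filter.1 hχ).2
      _ ≤ ∑ χ : Fin n → Bool, (1/64:ℝ) ^ (univ.filter fun j => χ j ≠ χ₁ j).card := by
          apply Finset.sum_le_sum_of_subset_of_nonneg (Finset.filter_subset _ _)
          intro χ _ _; positivity
      _ = (65/64:ℝ) ^ n := htotal
  have h65 : (65/64:ℝ) ^ n = Real.exp (n * Real.log (65/64)) := by
    rw [Real.exp_nat_mul, Real.exp_log (by norm_num)]
  have hc2 : (ball.card : ℝ) ≤ Real.exp (n * Real.log (65/64) + (n/64) * Real.log 64) := by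
    rw [Real.exp_add]
    rw [h65] at hcard
    have hepos := Real.exp_pos (-(n/64) * Real.log 64)
    have : Real.exp (-(n/64) * Real.log 64) * Real.exp ((n/64) * Real.log 64) = 1 := by
      rw [← Real.exp_add]; simp
    nlinarith [Real.exp_pos ((n/64) * Real.log 64), Real.exp_pos (n * Real.log (65/64))]
  refine lt_of_le_of_lt hc2 ?_
  apply Real.exp_lt_exp.2
  have hlog6564 : Real.log (65/64) ≤ 1/64 := by
    have := Real.log_le_sub_one_of_pos (show (0:ℝ) < 65/64 by norm_num)
    linarith [this]
  have hlog2 : (0.6931471803:ℝ) < Real.log 2 := Real.log_two_gt_d9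
  have hkey : Real.log (65/64) + (1/64) * Real.log 64 < 4/5 * Real.log 2 := by
    rw [hlog64]
    nlinarith
  calc (n:ℝ) * Real.log (65/64) + (n/64) * Real.log 64
      = n * (Real.log (65/64) + (1/64) * Real.log 64) := by ring
    _ < n * (4/5 * Real.log 2) := by
        apply mul_lt_mul_of_pos_left hkey hn'
    _ = 4/5 * n * Real.log 2 := by ring

set_option maxHeartbeats 2000000 in
lemma key {m n : ℕ} (hm : 0 < m) (hn : 0 < n) (a : Fin m → Fin n → ℝ)
    (ha : ∀ i j, |a i j| ≤ 1) :
    ∃ χ₁ χ₂ : Fin n → Bool,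
      (n : ℝ) / 64 ≤ ((univ.filter fun j => χ₁ j ≠ χ₂ j).card : ℝ) ∧
      ∀ i, |(∑ j, a i j * sgn (χ₁ j)) - ∑ j, a i j * sgn (χ₂ j)| ≤
        16 * Real.sqrt (n * Real.log ((m : ℝ) / n + 2)) := by
  have hn' : (0:ℝ) < n := by exact_mod_cast hn
  have hm' : (0:ℝ) < m := by exact_mod_cast hm
  have hlog2 : (0:ℝ) < Real.log 2 := Real.log_pos one_lt_two
  set x : ℝ := (m:ℝ) / n with hx
  have hxpos : 0 < x := by positivity
  set L : ℝ := Real.log (x + 2) with hL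
  have h2x : (2:ℝ) ≤ x + 2 := by linarith
  have hLlog2 : Real.log 2 ≤ L := Real.log_le_log (by norm_num) h2x
  have hLpos : 0 < L := lt_of_lt_of_le hlog2 hLlog2
  set Δ : ℝ := 16 * Real.sqrt (n * L) with hΔdef
  have hnL : (0:ℝ) < n * L := by positivity
  have hΔpos : 0 < Δ := by
    rw [hΔdef]
    have := Real.sqrt_pos.2 hnL
    positivity
  have hΔsq : Δ ^ 2 = 256 * (n * L) := by
    rw [hΔdef, mul_pow, Real.sq_sqrt hnL.le]
    norm_num
  have hΔcond : Real.sqrt (256 * Real.log 2 * n) ≤ Δ := by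
    have h1 : 256 * Real.log 2 * n ≤ Δ ^ 2 := by
      rw [hΔsq]; nlinarith
    calc Real.sqrt (256 * Real.log 2 * n) ≤ Real.sqrt (Δ ^ 2) := Real.sqrt_le_sqrt h1
      _ = Δ := Real.sqrt_sq hΔpos.le
  -- bucket map
  set b : (Fin n → Bool) → Fin m → ℤ :=
    fun χ i => ⌊(∑ j, a i j * sgn (χ j)) / Δ + 1/2⌋ with hb
  set ρ : ℝ := Real.exp (-Δ ^ 2 / (16 * n)) with hρ
  -- total entropy bound
  have htotal : ∑ β ∈ univ.image b,
      -((((univ.filter fun χ : Fin n → Bool => b χ = β).card : ℝ) / 2 ^ n) *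
        Real.log (((univ.filter fun χ : Fin n → Bool => b χ = β).card : ℝ) / 2 ^ n))
      ≤ m * (16 * ρ) := by
    refine (gibbs b).trans ?_
    have hrow : ∀ i : Fin m,
        ∑ k ∈ univ.image (fun χ : Fin n → Bool => b χ i),
          -((((univ.filter fun χ : Fin n → Bool => b χ i = k).card : ℝ) / 2 ^ n) *
            Real.log (((univ.filter fun χ : Fin n → Bool => b χ i = k).card : ℝ) / 2 ^ n))
          ≤ 16 * ρ := by
      intro i
      exact row_entropy hn (a i) (ha i) hΔcond (fun χ => b χ i) (fun χ => rfl)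
    calc ∑ i : Fin m, ∑ k ∈ univ.image (fun χ : Fin n → Bool => b χ i),
          -((((univ.filter fun χ : Fin n → Bool => b χ i = k).card : ℝ) / 2 ^ n) *
            Real.log (((univ.filter fun χ : Fin n → Bool => b χ i = k).card : ℝ) / 2 ^ n))
        ≤ ∑ _i : Fin m, 16 * ρ := Finset.sum_le_sum (fun i _ => hrow i)
      _ = m * (16 * ρ) := by rw [Finset.sum_const, Finset.card_univ, Fintype.card_fin,
            nsmul_eq_mul]
  -- numeric facts
  have hexp16 : Real.exp (16 * L) = (x + 2) ^ 16 := by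
    rw [show (16:ℝ) * L = ((16:ℕ) : ℝ) * L by norm_num, Real.exp_nat_mul,
      Real.exp_log (by linarith)]
  have hρval : ρ = ((x + 2) ^ 16)⁻¹ := by
    rw [hρ, hΔsq]
    have h1 : -(256 * (n * L)) / (16 * n) = -(16 * L) := by
      field_simp
      ring
    rw [h1, Real.exp_neg, hexp16]
  have hx2pos : (0:ℝ) < (x + 2) ^ 16 := by positivity
  have hmain : (m:ℝ) * (16 * ρ) ≤ Real.log 2 * n / 5 := by
    rw [hρval]
    have hpow14 : (2:ℝ) ^ 14 ≤ (x + 2) ^ 14 := pow_le_pow_left₀ (by norm_num) h2x 14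
    have hq : (2:ℝ) ^ 14 * (8 * x) ≤ (x + 2) ^ 16 := by
      have h8 : 8 * x ≤ (x + 2) ^ 2 := by nlinarith [sq_nonneg (x - 2)]
      calc (2:ℝ) ^ 14 * (8 * x) ≤ (x + 2) ^ 14 * (8 * x) := by
            apply mul_le_mul_of_nonneg_right hpow14 (by positivity)
        _ ≤ (x + 2) ^ 14 * (x + 2) ^ 2 := by
            apply mul_le_mul_of_nonneg_left h8 (by positivity)
        _ = (x + 2) ^ 16 := by ring
    have hlogd : (0.6931471803:ℝ) < Real.log 2 := Real.log_two_gt_d9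
    have hmnx : (m:ℝ) = n * x := by rw [hx]; field_simp
    have htarget : 16 * (m:ℝ) ≤ Real.log 2 * n / 5 * (x + 2) ^ 16 := by
      have hc : (16:ℝ) ≤ Real.log 2 / 5 * ((2:ℝ) ^ 14 * 8) := by nlinarith
      calc 16 * (m:ℝ) = 16 * (n * x) := by rw [hmnx]
        _ ≤ (Real.log 2 / 5 * ((2:ℝ) ^ 14 * 8)) * (n * x) := by
            apply mul_le_mul_of_nonneg_right hc (by positivity)
        _ = Real.log 2 * n / 5 * ((2:ℝ) ^ 14 * (8 * x)) := by ring
        _ ≤ Real.log 2 * n / 5 * (x + 2) ^ 16 := by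
            apply mul_le_mul_of_nonneg_left hq (by positivity)
    calc (m:ℝ) * (16 * ((x + 2) ^ 16)⁻¹) = (16 * m) * ((x + 2) ^ 16)⁻¹ := by ring
      _ ≤ (Real.log 2 * n / 5 * (x + 2) ^ 16) * ((x + 2) ^ 16)⁻¹ := by
          apply mul_le_mul_of_nonneg_right htarget (by positivity)
      _ = Real.log 2 * n / 5 := by field_simp
  -- heavy atom
  have hpow2 : (0:ℝ) < 2 ^ n := by positivity
  have hcards : (univ : Finset (Fin n → Bool)).card = 2 ^ n := by
    rw [Finset.card_univ]; simp [Fintype.card_fun]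
  have hsum1 : ∑ β ∈ univ.image b,
      (((univ.filter fun χ : Fin n → Bool => b χ = β).card : ℝ) / 2 ^ n) = 1 := by
    rw [← Finset.sum_div, div_eq_one_iff_eq (ne_of_gt hpow2)]
    have h := Finset.card_eq_sum_card_image b (univ : Finset (Fin n → Bool))
    rw [hcards] at h
    exact_mod_cast h.symm
  have hBne : (univ.image b).Nonempty := Finset.Nonempty.image Finset.univ_nonempty b
  have hppos : ∀ β ∈ univ.image b,
      0 < ((univ.filter fun χ : Fin n → Bool => b χ = β).card : ℝ) / 2 ^ n := by
    intro β hβ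
    rw [Finset.mem_image] at hβ
    obtain ⟨χ, _, hχ⟩ := hβ
    have hc : 0 < (univ.filter fun χ' : Fin n → Bool => b χ' = β).card :=
      Finset.card_pos.2 ⟨χ, Finset.mem_filter.2 ⟨Finset.mem_univ _, hχ⟩⟩
    have : (0:ℝ) < ((univ.filter fun χ' : Fin n → Bool => b χ' = β).card : ℝ) := by
      exact_mod_cast hc
    exact div_pos this hpow2
  set θ : ℝ := Real.exp (-(Real.log 2 * n / 5)) with hθ
  have hatom : ∃ β ∈ univ.image b, θ ≤
      ((univ.filter fun χ : Fin n → Bool => b χ = β).card : ℝ) / 2 ^ n := by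
    by_contra hcon
    push_neg at hcon
    have hterm : ∀ β ∈ univ.image b,
        (((univ.filter fun χ : Fin n → Bool => b χ = β).card : ℝ) / 2 ^ n) *
          (Real.log 2 * n / 5) <
        -((((univ.filter fun χ : Fin n → Bool => b χ = β).card : ℝ) / 2 ^ n) *
          Real.log (((univ.filter fun χ : Fin n → Bool => b χ = β).card : ℝ) / 2 ^ n)) := by
      intro β hβ
      have hp := hppos β hβ
      have hlt := hcon β hβ
      have hloglt : Real.log (((univ.filter fun χ : Fin n → Bool => b χ = β).card : ℝ) / 2 ^ n)
          < -(Real.log 2 * n / 5) := by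
        have := Real.log_lt_log hp hlt
        rwa [hθ, Real.log_exp] at this
      nlinarith
    have hlt2 : Real.log 2 * n / 5 <
        ∑ β ∈ univ.image b,
          -((((univ.filter fun χ : Fin n → Bool => b χ = β).card : ℝ) / 2 ^ n) *
            Real.log (((univ.filter fun χ : Fin n → Bool => b χ = β).card : ℝ) / 2 ^ n)) := by
      calc Real.log 2 * n / 5
          = ∑ β ∈ univ.image b,
              (((univ.filter fun χ : Fin n → Bool => b χ = β).card : ℝ) / 2 ^ n) *
                (Real.log 2 * n / 5) := by
            rw [← Finset.sum_mul, hsum1, one_mul]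
        _ < _ := Finset.sum_lt_sum_of_nonempty hBne hterm
    exact lt_irrefl _ (lt_of_lt_of_le hlt2 (htotal.trans hmain))
  obtain ⟨β, hβmem, hβ⟩ := hatom
  set Y := univ.filter (fun χ : Fin n → Bool => b χ = β) with hYdef
  have hYcard : Real.exp (4 / 5 * n * Real.log 2) ≤ (Y.card : ℝ) := by
    have h2n : ((2:ℝ)) ^ n = Real.exp (n * Real.log 2) := by
      rw [Real.exp_nat_mul, Real.exp_log (by norm_num)]
    rw [le_div_iff₀ hpow2] at hβ
    calc Real.exp (4 / 5 * n * Real.log 2) = θ * 2 ^ n := by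
          rw [hθ, h2n, ← Real.exp_add]; congr 1; ring
      _ ≤ (Y.card : ℝ) := hβ
  have hYne : Y.Nonempty := by
    have hYpos : (0:ℝ) < (Y.card : ℝ) := lt_of_lt_of_le (Real.exp_pos _) hYcard
    have : 0 < Y.card := by exact_mod_cast hYpos
    exact Finset.card_pos.1 this
  obtain ⟨χ₁, hχ₁⟩ := hYne
  have hfar : ∃ χ₂ ∈ Y, (n:ℝ) / 64 ≤ ((univ.filter fun j => χ₂ j ≠ χ₁ j).card : ℝ) := by
    by_contra hcon
    push_neg at hcon
    have hsub : Y ⊆ univ.filter fun χ : Fin n → Bool =>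
        ((univ.filter fun j => χ j ≠ χ₁ j).card : ℝ) < n / 64 := by
      intro χ hχ
      exact Finset.mem_filter.2 ⟨Finset.mem_univ _, hcon χ hχ⟩
    have h1 : (Y.card : ℝ) ≤
        ((univ.filter fun χ : Fin n → Bool =>
          ((univ.filter fun j => χ j ≠ χ₁ j).card : ℝ) < n / 64).card : ℝ) := by
      exact_mod_cast Finset.card_le_card hsub
    have h2 := ball_count hn χ₁
    linarith
  obtain ⟨χ₂, hχ₂Y, hχ₂far⟩ := hfar
  refine ⟨χ₂, χ₁, hχ₂far, ?_⟩
  intro i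
  have hb1 : b χ₂ = β := (Finset.mem_filter.1 hχ₂Y).2
  have hb2 : b χ₁ = β := (Finset.mem_filter.1 hχ₁).2
  have hfl0 : b χ₂ i = b χ₁ i := by rw [hb1, hb2]
  have hfl : ⌊(∑ j, a i j * sgn (χ₂ j)) / Δ + 1/2⌋ = ⌊(∑ j, a i j * sgn (χ₁ j)) / Δ + 1/2⌋ := by
    simpa only [hb] using hfl0
  have h1 := Int.floor_le ((∑ j, a i j * sgn (χ₂ j)) / Δ + 1/2)
  have h2 := Int.lt_floor_add_one ((∑ j, a i j * sgn (χ₂ j)) / Δ + 1/2)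
  have h3 := Int.floor_le ((∑ j, a i j * sgn (χ₁ j)) / Δ + 1/2)
  have h4 := Int.lt_floor_add_one ((∑ j, a i j * sgn (χ₁ j)) / Δ + 1/2)
  rw [hfl] at h1 h2
  have hdiff : |(∑ j, a i j * sgn (χ₂ j)) / Δ - (∑ j, a i j * sgn (χ₁ j)) / Δ| < 1 := by
    rw [abs_sub_lt_iff]
    constructor <;> linarith
  have hfinal : |(∑ j, a i j * sgn (χ₂ j)) - ∑ j, a i j * sgn (χ₁ j)| < Δ := by
    have heq : (∑ j, a i j * sgn (χ₂ j)) - (∑ j, a i j * sgn (χ₁ j)) =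
        ((∑ j, a i j * sgn (χ₂ j)) / Δ - (∑ j, a i j * sgn (χ₁ j)) / Δ) * Δ := by
      field_simp
    rw [heq, abs_mul, abs_of_pos hΔpos]
    calc |(∑ j, a i j * sgn (χ₂ j)) / Δ - (∑ j, a i j * sgn (χ₁ j)) / Δ| * Δ
        < 1 * Δ := by apply mul_lt_mul_of_pos_right hdiff hΔpos
      _ = Δ := one_mul Δ
  exact hfinal.le

end SpencerAux

open SpencerAux

/-- Partial-coloring form of Spencer's theorem: there is an absolute constant `C > 0` such that
for every `A ∈ ℝ^{m×n}` with `‖A‖_{1→∞} ≤ 1` and every diagonal matrix `Λ` (given by its diagonal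
entries, each of absolute value at most 1), there is `v ∈ [-1,1]^n` with at least `n/C`
coordinates of absolute value exactly 1 and `‖AΛv‖_∞ ≤ C √(n log(m/n + 2))`. -/
theorem spencer_partial_coloring :
    ∃ C : ℝ, 0 < C ∧
      ∀ (m n : ℕ), 0 < m → 0 < n →
        ∀ A : Matrix (Fin m) (Fin n) ℝ, (∀ i j, |A i j| ≤ 1) →
          ∀ Λ : Fin n → ℝ, (∀ j, |Λ j| ≤ 1) →
            ∃ v : Fin n → ℝ, (∀ j, |v j| ≤ 1) ∧
              (n : ℝ) / C ≤ (Set.ncard {j : Fin n | |v j| = 1} : ℝ) ∧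
              ∀ i, |A.mulVec (fun j => Λ j * v j) i| ≤
                C * Real.sqrt ((n : ℝ) * Real.log ((m : ℝ) / (n : ℝ) + 2)) := by
  refine ⟨64, by norm_num, ?_⟩
  intro m n hm hn A hA Λ hΛ
  set a : Fin m → Fin n → ℝ := fun i j => A i j * Λ j with ha_def
  have ha : ∀ i j, |a i j| ≤ 1 := by
    intro i j
    rw [ha_def]
    calc |A i j * Λ j| = |A i j| * |Λ j| := abs_mul _ _
      _ ≤ 1 * 1 := mul_le_mul (hA i j) (hΛ j) (abs_nonneg _) zero_le_one
      _ = 1 := by norm_num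
  obtain ⟨χ₁, χ₂, hfar, hrows⟩ := key hm hn a ha
  set v : Fin n → ℝ := fun j => (sgn (χ₁ j) - sgn (χ₂ j)) / 2 with hv_def
  refine ⟨v, ?_, ?_, ?_⟩
  · intro j
    rw [hv_def]
    cases h1 : χ₁ j <;> cases h2 : χ₂ j <;>
      simp [sgn, h1, h2] <;> norm_num
  · have hset : {j : Fin n | |v j| = 1} = ↑(univ.filter fun j => χ₁ j ≠ χ₂ j) := by
      ext j
      simp only [Set.mem_setOf_eq, Finset.coe_filter, Finset.mem_univ, true_and,
        Set.mem_setOf_eq]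
      rw [hv_def]
      cases h1 : χ₁ j <;> cases h2 : χ₂ j <;>
        simp [sgn, h1, h2] <;> norm_num
    rw [hset, Set.ncard_coe_finset]
    exact hfar
  · intro i
    have hmv : A.mulVec (fun j => Λ j * v j) i =
        ((∑ j, a i j * sgn (χ₁ j)) - ∑ j, a i j * sgn (χ₂ j)) / 2 := by
      rw [Matrix.mulVec, dotProduct]
      rw [← Finset.sum_sub_distrib, Finset.sum_div]
      apply Finset.sum_congr rfl
      intro j _
      rw [hv_def, ha_def]
      ring
    rw [hmv]
    have hsqrt : 0 ≤ Real.sqrt ((n : ℝ) * Real.log ((m : ℝ) / n + 2)) := Real.sqrt_nonneg _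
    calc |((∑ j, a i j * sgn (χ₁ j)) - ∑ j, a i j * sgn (χ₂ j)) / 2|
        = |(∑ j, a i j * sgn (χ₁ j)) - ∑ j, a i j * sgn (χ₂ j)| / 2 := by
          rw [abs_div]; norm_num
      _ ≤ 16 * Real.sqrt ((n : ℝ) * Real.log ((m : ℝ) / n + 2)) / 2 := by
          have := hrows i
          linarith
      _ ≤ 64 * Real.sqrt ((n : ℝ) * Real.log ((m : ℝ) / n + 2)) := by linarith
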